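/- arXiv:2207.01385 — 3 statements merged into one kernel-verified Lean document; each statement's English description precedes it below -/
import Mathlib

section
/- Let $1<p,q<\infty$, let $\mu\in A_{p,p}$ and $\lambda\in A_{q,q}$ (i.e. $[\mu]_{A_{p,p}}=\sup_Q\langle\mu^p\rangle_Q^{1/p}\langle\mu^{-p'}\rangle_Q^{1/p'}<\infty$, and similarly for $\lambda$). Then for every cube $Q$, with $\nu=(\mu/\lambda)^{1/(1/p+1/q')}$, one has $\langle\mu^p\rangle_Q^{1/p}\,\langle\lambda^{-q'}\rangle_Q^{1/q'} \le [\mu]_{A_{p,p}}\,[\lambda]_{A_{q,q}}\,\langle\nu\rangle_Q^{1/p+1/q'}$. -/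
open MeasureTheory
open scoped ENNReal

noncomputable def Cube (d : ℕ) (c : Fin d → ℝ) (l : ℝ) : Set (Fin d → ℝ) :=
  Set.univ.pi fun i => Set.Icc (c i) (c i + l)

noncomputable def avg (d : ℕ) (f : (Fin d → ℝ) → ℝ) (Q : Set (Fin d → ℝ)) : ℝ :=
  (∫ x in Q, f x) / (volume Q).toReal

lemma cube_volume (d : ℕ) (c : Fin d → ℝ) (l : ℝ) :
    volume (Cube d c l) = ENNReal.ofReal l ^ d := by
  rw [Cube, volume_pi_pi]
  simp [Real.volume_Icc]

lemma cube_volume_pos (d : ℕ) (c : Fin d → ℝ) {l : ℝ} (hl : 0 < l) :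
    0 < volume (Cube d c l) := by
  rw [cube_volume]
  exact ENNReal.pow_pos (by simpa using hl) d

lemma cube_volume_ne_top (d : ℕ) (c : Fin d → ℝ) (l : ℝ) :
    volume (Cube d c l) ≠ ⊤ := by
  rw [cube_volume]
  exact (ENNReal.pow_lt_top ENNReal.ofReal_lt_top).ne

lemma avg_nonneg' {d : ℕ} {Q : Set (Fin d → ℝ)} {f : (Fin d → ℝ) → ℝ}
    (hf : ∀ x, 0 ≤ f x) : 0 ≤ avg d f Q :=
  div_nonneg (integral_nonneg fun x => hf x) ENNReal.toReal_nonneg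

lemma avg_pos' {d : ℕ} {Q : Set (Fin d → ℝ)} (h0 : volume Q ≠ 0) (ht : volume Q ≠ ⊤)
    {f : (Fin d → ℝ) → ℝ} (hf : ∀ x, 0 < f x) (hfi : IntegrableOn f Q volume) :
    0 < avg d f Q := by
  have hV : 0 < (volume Q).toReal := ENNReal.toReal_pos h0 ht
  refine div_pos ?_ hV
  rw [setIntegral_pos_iff_support_of_nonneg_ae (Filter.Eventually.of_forall fun x => (hf x).le) hfi]
  have hsupp : Function.support f ∩ Q = Q :=
    Set.inter_eq_self_of_subset_right fun x _ => (hf x).ne'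
  rw [hsupp]
  exact lt_of_le_of_ne (zero_le) (Ne.symm h0)

lemma avg_one {d : ℕ} {Q : Set (Fin d → ℝ)} (h0 : volume Q ≠ 0) (ht : volume Q ≠ ⊤) :
    avg d (fun _ => (1 : ℝ)) Q = 1 := by
  have hV : 0 < (volume Q).toReal := ENNReal.toReal_pos h0 ht
  rw [avg, setIntegral_const, smul_eq_mul, mul_one, measureReal_def, div_self hV.ne']

lemma memLp_of_integrable_rpow {α : Type*} [MeasurableSpace α] {m : Measure α}
    {f : α → ℝ} {a : ℝ} (ha : 0 < a) (hf0 : ∀ x, 0 ≤ f x)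
    (hfm : AEStronglyMeasurable f m)
    (hfa : Integrable (fun x => f x ^ a) m) :
    MemLp f (ENNReal.ofReal a) m := by
  have h1 : (ENNReal.ofReal a) ≠ 0 := by
    simp [ENNReal.ofReal_eq_zero, not_le, ha]
  have h2 : (ENNReal.ofReal a) ≠ ⊤ := ENNReal.ofReal_ne_top
  refine (memLp_norm_rpow_iff (q := ENNReal.ofReal a) hfm h1 h2).mp ?_
  have he : (fun x => ‖f x‖ ^ (ENNReal.ofReal a).toReal) = fun x => f x ^ a := by
    funext x; rw [Real.norm_of_nonneg (hf0 x), ENNReal.toReal_ofReal ha.le]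
  rw [he, ENNReal.div_self h1 h2, memLp_one_iff_integrable]
  exact hfa

lemma holder_pkg {α : Type*} [MeasurableSpace α] {m : Measure α}
    {f g : α → ℝ} {a b : ℝ} (hab : Real.HolderConjugate a b)
    (hf0 : ∀ x, 0 ≤ f x) (hg0 : ∀ x, 0 ≤ g x)
    (hfm : AEStronglyMeasurable f m) (hgm : AEStronglyMeasurable g m)
    (hfa : Integrable (fun x => f x ^ a) m) (hgb : Integrable (fun x => g x ^ b) m) :
    Integrable (fun x => f x * g x) m ∧
      ∫ x, f x * g x ∂m ≤ (∫ x, f x ^ a ∂m) ^ (1/a) * (∫ x, g x ^ b ∂m) ^ (1/b) := by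
  have hfLp := memLp_of_integrable_rpow hab.pos hf0 hfm hfa
  have hgLp := memLp_of_integrable_rpow hab.symm.pos hg0 hgm hgb
  constructor
  · have hpqr : (1 : ℝ≥0∞) / 1 = 1 / ENNReal.ofReal a + 1 / ENNReal.ofReal b := by
      rw [one_div, one_div, one_div, inv_one,
        ← ENNReal.ofReal_inv_of_pos hab.pos, ← ENNReal.ofReal_inv_of_pos hab.symm.pos,
        ← ENNReal.ofReal_add (inv_nonneg.mpr hab.nonneg) (inv_nonneg.mpr hab.symm.nonneg),
        hab.inv_add_inv_eq_one, ENNReal.ofReal_one]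
    have := hgLp.smul (φ := f) hfLp (hpqr := ⟨by simpa only [one_div] using hpqr.symm⟩)
    rw [memLp_one_iff_integrable] at this
    exact this
  · exact integral_mul_le_Lp_mul_Lq_of_nonneg hab (.of_forall hf0) (.of_forall hg0) hfLp hgLp

lemma avg_holder {d : ℕ} {Q : Set (Fin d → ℝ)} (h0 : volume Q ≠ 0) (ht : volume Q ≠ ⊤)
    {f g : (Fin d → ℝ) → ℝ} {a b : ℝ} (hab : Real.HolderConjugate a b)
    (hf0 : ∀ x, 0 ≤ f x) (hg0 : ∀ x, 0 ≤ g x)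
    (hfm : AEStronglyMeasurable f (volume.restrict Q))
    (hgm : AEStronglyMeasurable g (volume.restrict Q))
    (hfa : IntegrableOn (fun x => f x ^ a) Q volume)
    (hgb : IntegrableOn (fun x => g x ^ b) Q volume) :
    IntegrableOn (fun x => f x * g x) Q volume ∧
      avg d (fun x => f x * g x) Q ≤
        avg d (fun x => f x ^ a) Q ^ (1/a) * avg d (fun x => g x ^ b) Q ^ (1/b) := by
  obtain ⟨hint, hle⟩ := holder_pkg hab hf0 hg0 hfm hgm hfa hgb
  refine ⟨hint, ?_⟩
  have hV : 0 < (volume Q).toReal := ENNReal.toReal_pos h0 ht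
  have hX : 0 ≤ ∫ x in Q, f x ^ a := integral_nonneg fun x => Real.rpow_nonneg (hf0 x) a
  have hY : 0 ≤ ∫ x in Q, g x ^ b := integral_nonneg fun x => Real.rpow_nonneg (hg0 x) b
  have hden : (volume Q).toReal ^ (1/a) * (volume Q).toReal ^ (1/b) = (volume Q).toReal := by
    rw [← Real.rpow_add hV, one_div, one_div, hab.inv_add_inv_eq_one, Real.rpow_one]
  rw [avg, avg, avg, Real.div_rpow hX hV.le, Real.div_rpow hY hV.le, div_mul_div_comm, hden]
  gcongr

lemma half_exp {x : ℝ} (hx : x ≠ 0) : 1 / (2 * x) + 1 / (2 * x) = 1 / x := by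
  rw [← add_div, one_add_one_eq_two, div_mul_eq_div_div,
    div_self (two_ne_zero (α := ℝ))]

lemma div_rpow_eq {u v : ℝ} (hu : 0 < u) (hv : 0 < v) (e : ℝ) :
    (u / v) ^ e = u ^ e * v ^ (-e) := by
  rw [Real.div_rpow hu.le hv.le, Real.rpow_neg hv.le, div_eq_mul_inv]

set_option maxHeartbeats 1600000 in
/-- If `μ ∈ A_{p,p}` and `λ ∈ A_{q,q}` with characteristics bounded by
`Cμ`, `Cλ`, then for every cube `Q`, with `ν = (μ/λ)^{1/(1/p+1/q')}`,
`⟨μ^p⟩_Q^{1/p} ⟨λ^{-q'}⟩_Q^{1/q'} ≤ Cμ Cλ ⟨ν⟩_Q^{1/p+1/q'}`. -/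
theorem stmt1 (d : ℕ) (hd : 0 < d) (p q : ℝ) (hp : 1 < p) (hq : 1 < q)
    (μ lam : (Fin d → ℝ) → ℝ) (hμpos : ∀ x, 0 < μ x) (hlampos : ∀ x, 0 < lam x)
    (hμp : ∀ (c : Fin d → ℝ) (l : ℝ), 0 < l →
      IntegrableOn (fun x => μ x ^ p) (Cube d c l) volume)
    (hμp' : ∀ (c : Fin d → ℝ) (l : ℝ), 0 < l →
      IntegrableOn (fun x => μ x ^ (-(p / (p - 1)))) (Cube d c l) volume)
    (hlamq : ∀ (c : Fin d → ℝ) (l : ℝ), 0 < l →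
      IntegrableOn (fun x => lam x ^ q) (Cube d c l) volume)
    (hlamq' : ∀ (c : Fin d → ℝ) (l : ℝ), 0 < l →
      IntegrableOn (fun x => lam x ^ (-(q / (q - 1)))) (Cube d c l) volume)
    (Cμ Clam : ℝ)
    (hAμ : ∀ (c : Fin d → ℝ) (l : ℝ), 0 < l →
      avg d (fun x => μ x ^ p) (Cube d c l) ^ (1 / p) *
        avg d (fun x => μ x ^ (-(p / (p - 1)))) (Cube d c l) ^ (1 / (p / (p - 1))) ≤ Cμ)
    (hAlam : ∀ (c : Fin d → ℝ) (l : ℝ), 0 < l →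
      avg d (fun x => lam x ^ q) (Cube d c l) ^ (1 / q) *
        avg d (fun x => lam x ^ (-(q / (q - 1)))) (Cube d c l) ^ (1 / (q / (q - 1))) ≤ Clam)
    (c : Fin d → ℝ) (l : ℝ) (hl : 0 < l) :
    avg d (fun x => μ x ^ p) (Cube d c l) ^ (1 / p)
        * avg d (fun x => lam x ^ (-(q / (q - 1)))) (Cube d c l) ^ (1 / (q / (q - 1)))
      ≤ Cμ * Clam *
        avg d (fun x => (μ x / lam x) ^ ((1 / p + 1 / (q / (q - 1)))⁻¹)) (Cube d c l)
          ^ (1 / p + 1 / (q / (q - 1))) := by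
  have hp0 : 0 < p := lt_trans one_pos hp
  have hq0 : 0 < q := lt_trans one_pos hq
  have h0 : volume (Cube d c l) ≠ 0 := (cube_volume_pos d c hl).ne'
  have ht : volume (Cube d c l) ≠ ⊤ := cube_volume_ne_top d c l
  have hμpint := hμp c l hl
  have hμ'int := hμp' c l hl
  have hlqint := hlamq c l hl
  have hl2int := hlamq' c l hl
  have h1 := hAμ c l hl
  have h2 := hAlam c l hl
  clear hμp hμp' hlamq hlamq' hAμ hAlam
  set Q : Set (Fin d → ℝ) := Cube d c l with hQdef
  set p' : ℝ := p / (p - 1) with hp'def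
  set q' : ℝ := q / (q - 1) with hq'def
  have hpc : p.HolderConjugate p' := Real.HolderConjugate.conjExponent hp
  have hqc : q.HolderConjugate q' := Real.HolderConjugate.conjExponent hq
  have hp'1 : 1 < p' := hpc.symm.lt
  have hq'1 : 1 < q' := hqc.symm.lt
  have hp'0 : 0 < p' := lt_trans one_pos hp'1
  have hq'0 : 0 < q' := lt_trans one_pos hq'1
  set r : ℝ := 1 / p + 1 / q' with hrdef
  have hpp' : 1 / p + 1 / p' = 1 := by
    rw [one_div, one_div]; exact hpc.inv_add_inv_eq_one
  have hqq' : 1 / q + 1 / q' = 1 := by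
    rw [one_div, one_div]; exact hqc.inv_add_inv_eq_one
  have h1p0 : 0 < 1 / p := one_div_pos.mpr hp0
  have h1q'0 : 0 < 1 / q' := one_div_pos.mpr hq'0
  have h1p : 1 / p < 1 := by rw [div_lt_one hp0]; exact hp
  have h1q' : 1 / q' < 1 := by rw [div_lt_one hq'0]; exact hq'1
  have hr0 : 0 < r := by rw [hrdef]; linarith
  have hrne : r ≠ 0 := hr0.ne'
  have hr2 : r < 2 := by rw [hrdef]; linarith
  have h2r : 0 < (2 : ℝ) - r := by linarith
  have h2rne : (2 : ℝ) - r ≠ 0 := h2r.ne'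
  have h2rsum : 1 / p' + 1 / q = 2 - r := by rw [hrdef]; linarith
  -- measurability
  have hμa : AEMeasurable μ (volume.restrict Q) := by
    have hb : AEMeasurable (fun x => μ x ^ p) (volume.restrict Q) := hμpint.aemeasurable
    refine (hb.pow aemeasurable_const (g := fun _ => 1 / p)).congr
      (Filter.Eventually.of_forall fun x => ?_)
    show (μ x ^ p) ^ (1 / p) = μ x
    rw [← Real.rpow_mul (hμpos x).le, mul_one_div, div_self hp0.ne', Real.rpow_one]
  have hlama : AEMeasurable lam (volume.restrict Q) := by
    have hb : AEMeasurable (fun x => lam x ^ q) (volume.restrict Q) := hlqint.aemeasurable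
    refine (hb.pow aemeasurable_const (g := fun _ => 1 / q)).congr
      (Filter.Eventually.of_forall fun x => ?_)
    show (lam x ^ q) ^ (1 / q) = lam x
    rw [← Real.rpow_mul (hlampos x).le, mul_one_div, div_self hq0.ne', Real.rpow_one]
  -- conjugate exponent pairs
  have hab0 : (r * p).HolderConjugate (r * q') := by
    rw [Real.holderConjugate_iff]; constructor
    · have e : r * p = 1 + p / q' := by rw [hrdef]; field_simp
      rw [e]
      have := div_pos hp0 hq'0
      linarith
    · have e : (r * p)⁻¹ + (r * q')⁻¹ = r⁻¹ * (1 / p + 1 / q') := by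
        rw [mul_inv, mul_inv, one_div, one_div]; ring
      rw [e, ← hrdef, inv_mul_cancel₀ hrne]
  have hab1 : (p' * (2 - r)).HolderConjugate (q * (2 - r)) := by
    rw [Real.holderConjugate_iff]; constructor
    · have e : p' * (2 - r) = 1 + p' / q := by rw [← h2rsum]; field_simp
      rw [e]
      have := div_pos hp'0 hq0
      linarith
    · have e : (p' * (2 - r))⁻¹ + (q * (2 - r))⁻¹ = (2 - r)⁻¹ * (1 / p' + 1 / q) := by
        rw [mul_inv, mul_inv, one_div, one_div]; ring
      rw [e, h2rsum, inv_mul_cancel₀ h2rne]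
  have hab2 : ((2 : ℝ) / r).HolderConjugate (2 / (2 - r)) := by
    rw [Real.holderConjugate_iff]; constructor
    · rw [lt_div_iff₀ hr0]; linarith
    · rw [inv_div, inv_div]; ring
  -- Hölder I : integrability of ν
  have eF0 : (fun x => (μ x ^ r⁻¹) ^ (r * p)) = fun x => μ x ^ p := by
    funext x
    rw [← Real.rpow_mul (hμpos x).le, ← mul_assoc, inv_mul_cancel₀ hrne, one_mul]
  have eG0 : (fun x => (lam x ^ (-r⁻¹)) ^ (r * q')) = fun x => lam x ^ (-q') := by
    funext x
    rw [← Real.rpow_mul (hlampos x).le, neg_mul, ← mul_assoc, inv_mul_cancel₀ hrne, one_mul]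
  obtain ⟨hνint0, -⟩ := avg_holder (d := d) h0 ht hab0
    (f := fun x => μ x ^ r⁻¹) (g := fun x => lam x ^ (-r⁻¹))
    (fun x => Real.rpow_nonneg (hμpos x).le _) (fun x => Real.rpow_nonneg (hlampos x).le _)
    ((hμa.pow aemeasurable_const).aestronglyMeasurable)
    ((hlama.pow aemeasurable_const).aestronglyMeasurable)
    (by beta_reduce; rw [eF0]; exact hμpint)
    (by beta_reduce; rw [eG0]; exact hl2int)
  have hνint : IntegrableOn (fun x => (μ x / lam x) ^ r⁻¹) Q volume :=
    hνint0.congr (Filter.Eventually.of_forall fun x =>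
      (div_rpow_eq (hμpos x) (hlampos x) r⁻¹).symm)
  -- Hölder II : bound for w = (μ/λ)^(-(2-r)⁻¹)
  have eF1 : (fun x => (μ x ^ (-(2 - r)⁻¹)) ^ (p' * (2 - r))) = fun x => μ x ^ (-p') := by
    funext x
    rw [← Real.rpow_mul (hμpos x).le]
    congr 1
    field_simp
  have eG1 : (fun x => (lam x ^ ((2 - r)⁻¹)) ^ (q * (2 - r))) = fun x => lam x ^ q := by
    funext x
    rw [← Real.rpow_mul (hlampos x).le]
    congr 1
    field_simp
  obtain ⟨hwint0, hH1⟩ := avg_holder (d := d) h0 ht hab1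
    (f := fun x => μ x ^ (-(2 - r)⁻¹)) (g := fun x => lam x ^ ((2 - r)⁻¹))
    (fun x => Real.rpow_nonneg (hμpos x).le _) (fun x => Real.rpow_nonneg (hlampos x).le _)
    ((hμa.pow aemeasurable_const).aestronglyMeasurable)
    ((hlama.pow aemeasurable_const).aestronglyMeasurable)
    (by beta_reduce; rw [eF1]; exact hμ'int)
    (by beta_reduce; rw [eG1]; exact hlqint)
  have ew : (fun x => μ x ^ (-(2 - r)⁻¹) * lam x ^ ((2 - r)⁻¹))
      = fun x => (μ x / lam x) ^ (-(2 - r)⁻¹) := by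
    funext x
    rw [div_rpow_eq (hμpos x) (hlampos x) (-(2 - r)⁻¹), neg_neg]
  have hwint : IntegrableOn (fun x => (μ x / lam x) ^ (-(2 - r)⁻¹)) Q volume :=
    hwint0.congr (Filter.Eventually.of_forall fun x => congrFun ew x)
  beta_reduce at hH1
  rw [ew, eF1, eG1] at hH1
  -- Hölder III : 1 ≤ ⟨ν⟩^(r/2) ⟨w⟩^((2-r)/2)
  have eF2 : (fun x => ((μ x / lam x) ^ (2⁻¹ : ℝ)) ^ ((2 : ℝ) / r))
      = fun x => (μ x / lam x) ^ r⁻¹ := by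
    funext x
    rw [← Real.rpow_mul (div_pos (hμpos x) (hlampos x)).le]
    congr 1
    field_simp
  have eG2 : (fun x => ((μ x / lam x) ^ (-(2⁻¹ : ℝ))) ^ ((2 : ℝ) / (2 - r)))
      = fun x => (μ x / lam x) ^ (-(2 - r)⁻¹) := by
    funext x
    rw [← Real.rpow_mul (div_pos (hμpos x) (hlampos x)).le]
    congr 1
    field_simp
  obtain ⟨-, hH2⟩ := avg_holder (d := d) h0 ht hab2
    (f := fun x => (μ x / lam x) ^ (2⁻¹ : ℝ)) (g := fun x => (μ x / lam x) ^ (-(2⁻¹ : ℝ)))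
    (fun x => Real.rpow_nonneg (div_pos (hμpos x) (hlampos x)).le _)
    (fun x => Real.rpow_nonneg (div_pos (hμpos x) (hlampos x)).le _)
    (((hμa.div hlama).pow aemeasurable_const).aestronglyMeasurable)
    (((hμa.div hlama).pow aemeasurable_const).aestronglyMeasurable)
    (by beta_reduce; rw [eF2]; exact hνint)
    (by beta_reduce; rw [eG2]; exact hwint)
  beta_reduce at hH2
  have eone : (fun x => (μ x / lam x) ^ (2⁻¹ : ℝ) * (μ x / lam x) ^ (-(2⁻¹ : ℝ)))
      = fun _ => (1 : ℝ) := by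
    funext x
    rw [← Real.rpow_add (div_pos (hμpos x) (hlampos x)), add_neg_cancel, Real.rpow_zero]
  rw [eone, eF2, eG2, avg_one h0 ht, one_div_div, one_div_div] at hH2
  -- abbreviations
  have hAμpnn : 0 ≤ avg d (fun x => μ x ^ p) Q :=
    avg_nonneg' fun x => Real.rpow_nonneg (hμpos x).le _
  have hAl2nn : 0 ≤ avg d (fun x => lam x ^ (-q')) Q :=
    avg_nonneg' fun x => Real.rpow_nonneg (hlampos x).le _
  have hAνnn : 0 ≤ avg d (fun x => (μ x / lam x) ^ r⁻¹) Q :=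
    avg_nonneg' fun x => Real.rpow_nonneg (div_pos (hμpos x) (hlampos x)).le _
  have hAwnn : 0 ≤ avg d (fun x => (μ x / lam x) ^ (-(2 - r)⁻¹)) Q :=
    avg_nonneg' fun x => Real.rpow_nonneg (div_pos (hμpos x) (hlampos x)).le _
  have hAμ'pos : 0 < avg d (fun x => μ x ^ (-p')) Q :=
    avg_pos' h0 ht (fun x => Real.rpow_pos_of_pos (hμpos x) _) hμ'int
  have hAlqpos : 0 < avg d (fun x => lam x ^ q) Q :=
    avg_pos' h0 ht (fun x => Real.rpow_pos_of_pos (hlampos x) _) hlqint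
  set Aμp := avg d (fun x => μ x ^ p) Q
  set Aμ' := avg d (fun x => μ x ^ (-p')) Q
  set Alq := avg d (fun x => lam x ^ q) Q
  set Al2 := avg d (fun x => lam x ^ (-q')) Q
  set Aν := avg d (fun x => (μ x / lam x) ^ r⁻¹) Q
  set Aw := avg d (fun x => (μ x / lam x) ^ (-(2 - r)⁻¹)) Q
  -- combine Hölder II and III
  have hstep : Aw ^ ((2 - r) / 2) ≤ Aμ' ^ (1 / (2 * p')) * Alq ^ (1 / (2 * q)) := by
    have h5 : Aw ^ ((2 - r) / 2)
        ≤ (Aμ' ^ (1 / (p' * (2 - r))) * Alq ^ (1 / (q * (2 - r)))) ^ ((2 - r) / 2) :=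
      Real.rpow_le_rpow hAwnn hH1 (div_nonneg h2r.le (by norm_num))
    rw [Real.mul_rpow (Real.rpow_nonneg hAμ'pos.le _) (Real.rpow_nonneg hAlqpos.le _),
      ← Real.rpow_mul hAμ'pos.le, ← Real.rpow_mul hAlqpos.le] at h5
    have e1 : 1 / (p' * (2 - r)) * ((2 - r) / 2) = 1 / (2 * p') := by
      field_simp
    have e2 : 1 / (q * (2 - r)) * ((2 - r) / 2) = 1 / (2 * q) := by
      field_simp
    rwa [e1, e2] at h5
  have h3 : 1 ≤ Aν ^ (r / 2) * (Aμ' ^ (1 / (2 * p')) * Alq ^ (1 / (2 * q))) :=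
    le_trans hH2 (mul_le_mul_of_nonneg_left hstep (Real.rpow_nonneg hAνnn _))
  have hAνpos : 0 < Aν := by
    rcases hAνnn.lt_or_eq with h | h
    · exact h
    · exfalso
      rw [← h, Real.zero_rpow (div_pos hr0 two_pos).ne', zero_mul] at h3
      linarith
  have h4 : 1 ≤ Aν ^ r * (Aμ' ^ (1 / p') * Alq ^ (1 / q)) := by
    have hs := mul_le_mul h3 h3 zero_le_one (le_trans zero_le_one h3)
    rw [one_mul] at hs
    refine le_trans hs (le_of_eq ?_)
    have ex : Aν ^ (r / 2) * Aν ^ (r / 2) = Aν ^ r := by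
      rw [← Real.rpow_add hAνpos]; congr 1; ring
    have ey : Aμ' ^ (1 / (2 * p')) * Aμ' ^ (1 / (2 * p')) = Aμ' ^ (1 / p') := by
      rw [← Real.rpow_add hAμ'pos]; congr 1; exact half_exp hp'0.ne'
    have ez : Alq ^ (1 / (2 * q)) * Alq ^ (1 / (2 * q)) = Alq ^ (1 / q) := by
      rw [← Real.rpow_add hAlqpos]; congr 1; exact half_exp hq0.ne'
    calc Aν ^ (r / 2) * (Aμ' ^ (1 / (2 * p')) * Alq ^ (1 / (2 * q)))
          * (Aν ^ (r / 2) * (Aμ' ^ (1 / (2 * p')) * Alq ^ (1 / (2 * q))))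
        = (Aν ^ (r / 2) * Aν ^ (r / 2)) * ((Aμ' ^ (1 / (2 * p')) * Aμ' ^ (1 / (2 * p')))
            * (Alq ^ (1 / (2 * q)) * Alq ^ (1 / (2 * q)))) := by ring
      _ = Aν ^ r * (Aμ' ^ (1 / p') * Alq ^ (1 / q)) := by rw [ex, ey, ez]
  -- final algebra
  have hCμ0 : 0 ≤ Cμ :=
    le_trans (mul_nonneg (Real.rpow_nonneg hAμpnn _) (Real.rpow_nonneg hAμ'pos.le _)) h1
  have hBC : 0 ≤ Alq ^ (1 / q) * Al2 ^ (1 / q') :=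
    mul_nonneg (Real.rpow_nonneg hAlqpos.le _) (Real.rpow_nonneg hAl2nn _)
  have k1 : Aμp ^ (1 / p) * Aμ' ^ (1 / p') * (Alq ^ (1 / q) * Al2 ^ (1 / q')) ≤ Cμ * Clam :=
    mul_le_mul h1 h2 hBC hCμ0
  have kN : 0 ≤ Aν ^ r := Real.rpow_nonneg hAνnn r
  nlinarith [mul_nonneg kN (sub_nonneg.mpr k1),
    mul_nonneg (mul_nonneg (Real.rpow_nonneg hAμpnn (1/p)) (Real.rpow_nonneg hAl2nn (1/q')))
      (sub_nonneg.mpr h4),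
    Real.rpow_nonneg hAμpnn (1/p), Real.rpow_nonneg hAl2nn (1/q')]
end

section
/- Let $1<p,q<\infty$, $\mu\in A_{p,p}$, $\lambda\in A_{q,q}$, $\alpha/d=1/p-1/q$, and $\nu=(\mu/\lambda)^{1/(1+\alpha/d)}$. Then for every locally integrable $b:\mathbb{R}^d\to\mathbb{C}$, the norms $\|b\|_{\mathrm{BMO}_\nu^\alpha}=\sup_Q \nu(Q)^{-\alpha/d}\frac{1}{\nu(Q)}\int_Q|b-\langle b\rangle_Q|$ and $\|b\|_{\mathrm{BMO}_{\mu,\lambda}^{p,q}}=\sup_Q \frac{1}{\mu^p(Q)^{1/p}\lambda^{-q'}(Q)^{1/q'}}\int_Q|b-\langle b\rangle_Q|$ are comparable, with constants depending only on $[\mu]_{A_{p,p}}$ and $[\lambda]_{A_{q,q}}$. -/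
open MeasureTheory

/-- Average of a complex-valued function over a set. -/
noncomputable def avgC (d : ℕ) (b : (Fin d → ℝ) → ℂ) (Q : Set (Fin d → ℝ)) : ℂ :=
  (volume Q).toReal⁻¹ • ∫ x in Q, b x

noncomputable def conj' (p : ℝ) : ℝ := p / (p - 1)

lemma holder2 {X : Type*} [MeasurableSpace X] {ρ : Measure X} {f g : X → ℝ}
    (hfpos : ∀ x, 0 < f x) (hgpos : ∀ x, 0 < g x)
    (hfi : Integrable f ρ) (hgi : Integrable g ρ)
    (hF : 0 < ∫ x, f x ∂ρ) (hG : 0 < ∫ x, g x ∂ρ)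
    {θ : ℝ} (hθ0 : 0 < θ) (hθ1 : θ < 1) :
    Integrable (fun x => f x ^ θ * g x ^ (1 - θ)) ρ ∧
      ∫ x, f x ^ θ * g x ^ (1 - θ) ∂ρ ≤ (∫ x, f x ∂ρ) ^ θ * (∫ x, g x ∂ρ) ^ (1 - θ) := by
  set F := ∫ x, f x ∂ρ with hFdef
  set G := ∫ x, g x ∂ρ with hGdef
  have hθ1' : (0:ℝ) ≤ 1 - θ := by linarith
  have hmeas : AEStronglyMeasurable (fun x => f x ^ θ * g x ^ (1 - θ)) ρ := by
    have h1 : AEMeasurable (fun x => f x ^ θ) ρ :=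
      (Real.continuous_rpow_const hθ0.le).measurable.comp_aemeasurable hfi.aemeasurable
    have h2 : AEMeasurable (fun x => g x ^ (1 - θ)) ρ :=
      (Real.continuous_rpow_const (by linarith)).measurable.comp_aemeasurable hgi.aemeasurable
    exact (h1.mul h2).aestronglyMeasurable
  have hprodpos : ∀ x, 0 < f x ^ θ * g x ^ (1 - θ) := fun x =>
    mul_pos (Real.rpow_pos_of_pos (hfpos x) _) (Real.rpow_pos_of_pos (hgpos x) _)
  have hint : Integrable (fun x => f x ^ θ * g x ^ (1 - θ)) ρ := by
    refine Integrable.mono' ((hfi.const_mul θ).add (hgi.const_mul (1 - θ))) hmeas ?_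
    refine Filter.Eventually.of_forall fun x => ?_
    rw [Real.norm_eq_abs, abs_of_pos (hprodpos x)]
    exact Real.geom_mean_le_arith_mean2_weighted hθ0.le hθ1' (hfpos x).le (hgpos x).le
      (by ring)
  refine ⟨hint, ?_⟩
  have hFθ : 0 < F ^ θ * G ^ (1 - θ) :=
    mul_pos (Real.rpow_pos_of_pos hF _) (Real.rpow_pos_of_pos hG _)
  rw [← div_le_one hFθ, div_eq_mul_inv]
  have hpt : ∀ x, (f x / F) ^ θ * (g x / G) ^ (1 - θ)
      = (f x ^ θ * g x ^ (1 - θ)) * (F ^ θ * G ^ (1 - θ))⁻¹ := by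
    intro x
    rw [Real.div_rpow (hfpos x).le hF.le, Real.div_rpow (hgpos x).le hG.le]
    field_simp
  have hle : ∫ x, (f x ^ θ * g x ^ (1 - θ)) * (F ^ θ * G ^ (1 - θ))⁻¹ ∂ρ
      ≤ ∫ x, θ * (f x / F) + (1 - θ) * (g x / G) ∂ρ := by
    refine integral_mono (hint.mul_const _) ?_ ?_
    · exact ((hfi.div_const F).const_mul θ).add ((hgi.div_const G).const_mul (1 - θ))
    · intro x
      dsimp only
      rw [← hpt x]
      exact Real.geom_mean_le_arith_mean2_weighted hθ0.le hθ1'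
        (div_nonneg (hfpos x).le hF.le) (div_nonneg (hgpos x).le hG.le) (by ring)
  have hrhs : ∫ x, θ * (f x / F) + (1 - θ) * (g x / G) ∂ρ = 1 := by
    rw [integral_add ((hfi.div_const F).const_mul θ) ((hgi.div_const G).const_mul (1 - θ)),
      integral_const_mul, integral_const_mul, integral_div, integral_div,
      ← hFdef, ← hGdef, div_self hF.ne', div_self hG.ne']
    ring
  calc (∫ x, f x ^ θ * g x ^ (1 - θ) ∂ρ) * (F ^ θ * G ^ (1 - θ))⁻¹
      = ∫ x, (f x ^ θ * g x ^ (1 - θ)) * (F ^ θ * G ^ (1 - θ))⁻¹ ∂ρ := by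
        rw [integral_mul_const]
    _ ≤ ∫ x, θ * (f x / F) + (1 - θ) * (g x / G) ∂ρ := hle
    _ = 1 := hrhs

lemma pos_setIntegral {X : Type*} [MeasurableSpace X] {ρ : Measure X} {s : Set X}
    (hs : ρ s ≠ 0) {f : X → ℝ} (hpos : ∀ x, 0 < f x) (hfi : IntegrableOn f s ρ) :
    0 < ∫ x in s, f x ∂ρ := by
  rw [setIntegral_pos_iff_support_of_nonneg_ae
    (Filter.Eventually.of_forall fun x => (hpos x).le) hfi]
  have : Function.support f = Set.univ := Set.eq_univ_of_forall fun x => (hpos x).ne'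
  rw [this, Set.univ_inter]
  exact pos_iff_ne_zero.mpr hs

set_option maxHeartbeats 1000000 in
/-- With `α/d = 1/p - 1/q` and `ν = (μ/λ)^{1/(1+α/d)}`, for every
locally integrable `b : ℝ^d → ℂ` and every cube `Q`, the oscillations
`ν(Q)^{-α/d} ν(Q)⁻¹ ∫_Q |b - ⟨b⟩_Q|` and
`(μ^p(Q)^{1/p} λ^{-q'}(Q)^{1/q'})⁻¹ ∫_Q |b - ⟨b⟩_Q|` are comparable, with constants
depending only on the `A_{p,p}`/`A_{q,q}` characteristics `Cμ`, `Cλ`. -/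
theorem stmt4 (d : ℕ) (hd : 0 < d) (p q : ℝ) (hp : 1 < p) (hq : 1 < q)
    (α : ℝ) (hα : α / (d : ℝ) = 1 / p - 1 / q)
    (μ lam : (Fin d → ℝ) → ℝ) (hμpos : ∀ x, 0 < μ x) (hlampos : ∀ x, 0 < lam x)
    (hμp : ∀ (c : Fin d → ℝ) (l : ℝ), 0 < l →
      IntegrableOn (fun x => μ x ^ p) (Cube d c l) volume)
    (hμp' : ∀ (c : Fin d → ℝ) (l : ℝ), 0 < l →
      IntegrableOn (fun x => μ x ^ (-(conj' p))) (Cube d c l) volume)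
    (hlamq : ∀ (c : Fin d → ℝ) (l : ℝ), 0 < l →
      IntegrableOn (fun x => lam x ^ q) (Cube d c l) volume)
    (hlamq' : ∀ (c : Fin d → ℝ) (l : ℝ), 0 < l →
      IntegrableOn (fun x => lam x ^ (-(conj' q))) (Cube d c l) volume)
    (Cμ Clam : ℝ) (hCμ : 0 < Cμ) (hClam : 0 < Clam)
    (hAμ : ∀ (c : Fin d → ℝ) (l : ℝ), 0 < l →
      avg d (fun x => μ x ^ p) (Cube d c l) ^ (1 / p) *
        avg d (fun x => μ x ^ (-(conj' p))) (Cube d c l) ^ (1 / conj' p) ≤ Cμ)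
    (hAlam : ∀ (c : Fin d → ℝ) (l : ℝ), 0 < l →
      avg d (fun x => lam x ^ q) (Cube d c l) ^ (1 / q) *
        avg d (fun x => lam x ^ (-(conj' q))) (Cube d c l) ^ (1 / conj' q) ≤ Clam)
    (b : (Fin d → ℝ) → ℂ) (hb : LocallyIntegrable b volume)
    (c : Fin d → ℝ) (l : ℝ) (hl : 0 < l) :
    (∫ x in Cube d c l, ‖b x - avgC d b (Cube d c l)‖) /
        ((∫ x in Cube d c l, μ x ^ p) ^ (1 / p) *
          (∫ x in Cube d c l, lam x ^ (-(conj' q))) ^ (1 / conj' q))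
      ≤ (∫ x in Cube d c l, (μ x / lam x) ^ ((1 + α / (d : ℝ))⁻¹)) ^ (-(α / (d : ℝ))) *
          ((∫ x in Cube d c l, ‖b x - avgC d b (Cube d c l)‖) /
            (∫ x in Cube d c l, (μ x / lam x) ^ ((1 + α / (d : ℝ))⁻¹))) ∧
    (∫ x in Cube d c l, (μ x / lam x) ^ ((1 + α / (d : ℝ))⁻¹)) ^ (-(α / (d : ℝ))) *
        ((∫ x in Cube d c l, ‖b x - avgC d b (Cube d c l)‖) /
          (∫ x in Cube d c l, (μ x / lam x) ^ ((1 + α / (d : ℝ))⁻¹)))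
      ≤ Cμ * Clam *
        ((∫ x in Cube d c l, ‖b x - avgC d b (Cube d c l)‖) /
          ((∫ x in Cube d c l, μ x ^ p) ^ (1 / p) *
            (∫ x in Cube d c l, lam x ^ (-(conj' q))) ^ (1 / conj' q))) := by
  -- basic positivity of exponents
  have hp0 : (0:ℝ) < p := by linarith
  have hq0 : (0:ℝ) < q := by linarith
  have hpc0 : 0 < conj' p := div_pos hp0 (by linarith)
  have hqc0 : 0 < conj' q := div_pos hq0 (by linarith)
  have hpinv : 1/p + 1/conj' p = 1 := by
    rw [conj']; field_simp; ring
  have hqinv : 1/q + 1/conj' q = 1 := by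
    rw [conj']; field_simp; ring
  set β := α / (d : ℝ) with hβ
  set σ := 1 + β with hσdef
  have hσ : σ = 1/p + 1/conj' q := by
    rw [hσdef, hα]; linarith [hqinv]
  have hσpos : 0 < σ :=
    hσ ▸ add_pos (by positivity) (by positivity)
  set s := σ⁻¹ with hsdef
  have hs0 : 0 < s := by rw [hsdef]; exact inv_pos.mpr hσpos
  have hsσ : s * σ = 1 := by
    rw [hsdef]; exact inv_mul_cancel₀ hσpos.ne'
  -- the cube and its volume
  have hvol : volume (Cube d c l) = ENNReal.ofReal l ^ d := by
    rw [Cube, volume_pi_pi]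
    simp [Real.volume_Icc]
  have hvolne : volume (Cube d c l) ≠ 0 := by
    rw [hvol]
    simp [ENNReal.ofReal_eq_zero, not_le, hl, pow_eq_zero_iff]
  set w := (volume (Cube d c l)).toReal with hwdef
  have hw : 0 < w := by
    rw [hwdef, hvol]
    simp only [ENNReal.toReal_pow]
    rw [ENNReal.toReal_ofReal hl.le]
    positivity
  -- integrability and positivity of the four weight integrals
  have Iμp := hμp c l hl
  have Iμp' := hμp' c l hl
  have Ilamq := hlamq c l hl
  have Ilamq' := hlamq' c l hl
  set A0 := ∫ x in Cube d c l, μ x ^ p with hA0def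
  set M0 := ∫ x in Cube d c l, μ x ^ (-(conj' p)) with hM0def
  set L0 := ∫ x in Cube d c l, lam x ^ q with hL0def
  set B0 := ∫ x in Cube d c l, lam x ^ (-(conj' q)) with hB0def
  have hA0 : 0 < A0 := pos_setIntegral hvolne
    (fun x => Real.rpow_pos_of_pos (hμpos x) _) Iμp
  have hM0 : 0 < M0 := pos_setIntegral hvolne
    (fun x => Real.rpow_pos_of_pos (hμpos x) _) Iμp'
  have hL0 : 0 < L0 := pos_setIntegral hvolne
    (fun x => Real.rpow_pos_of_pos (hlampos x) _) Ilamq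
  have hB0 : 0 < B0 := pos_setIntegral hvolne
    (fun x => Real.rpow_pos_of_pos (hlampos x) _) Ilamq'
  -- K1 : Hölder for ν
  have hθa : 0 < s / p := div_pos hs0 hp0
  have hpσ : 1 < p * σ := by
    rw [hσ, mul_add, mul_one_div, div_self hp0.ne']
    have : 0 < p * (1 / conj' q) := by positivity
    linarith
  have hθb : s / p < 1 := by
    rw [div_lt_one hp0, hsdef, inv_lt_iff_one_lt_mul₀ hσpos]
    linarith [hpσ]
  have hsum : s / p + s / conj' q = 1 := by
    have : s / p + s / conj' q = s * (1/p + 1/conj' q) := by ring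
    rw [this, ← hσ, hsσ]
  have hK1eq : ∀ x, (μ x ^ p) ^ (s/p) * (lam x ^ (-(conj' q))) ^ (1 - s/p)
      = (μ x / lam x) ^ s := by
    intro x
    have hX := hμpos x; have hY := hlampos x
    have h1 : 1 - s/p = s / conj' q := by linarith [hsum]
    have e1 : (μ x ^ p) ^ (s/p) = μ x ^ s := by
      rw [← Real.rpow_mul hX.le]; congr 1; field_simp
    have e2 : (lam x ^ (-(conj' q))) ^ (s / conj' q) = lam x ^ (-s) := by
      rw [← Real.rpow_mul hY.le]; congr 1; field_simp
    rw [h1, e1, e2, Real.div_rpow hX.le hY.le, Real.rpow_neg hY.le, div_eq_mul_inv]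
  -- K1: Hölder, integrability and upper bound for ν
  have K1 := holder2 (ρ := volume.restrict (Cube d c l))
    (f := fun x => μ x ^ p) (g := fun x => lam x ^ (-(conj' q)))
    (fun x => Real.rpow_pos_of_pos (hμpos x) _)
    (fun x => Real.rpow_pos_of_pos (hlampos x) _)
    Iμp Ilamq' hA0 hB0 hθa hθb
  rw [show (fun x => (μ x ^ p) ^ (s/p) * (lam x ^ (-(conj' q))) ^ (1 - s/p))
      = fun x => (μ x / lam x) ^ s from funext hK1eq] at K1
  obtain ⟨hνint, hK1le⟩ := K1
  set V := ∫ x in Cube d c l, (μ x / lam x) ^ s with hVdef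
  have hV : 0 < V := pos_setIntegral hvolne
    (fun x => Real.rpow_pos_of_pos (div_pos (hμpos x) (hlampos x)) _) hνint
  have hK1' : V ≤ A0 ^ (s/p) * B0 ^ (s / conj' q) := by
    have h1 : 1 - s/p = s / conj' q := by linarith [hsum]
    rw [← h1]; exact hK1le
  -- K2a
  set r := s / conj' p with hrdef
  set u := s / q with hudef
  have hr : 0 < r := div_pos hs0 hpc0
  have hu : 0 < u := div_pos hs0 hq0
  have hru : 0 < r + u := by linarith
  set a := r / (r + u) with hadef
  have ha0 : 0 < a := div_pos hr hru
  have ha1 : a < 1 := by rw [hadef, div_lt_one hru]; linarith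
  have h1a : 1 - a = u / (r + u) := by
    rw [hadef]; field_simp; ring
  have K2a := holder2 (ρ := volume.restrict (Cube d c l))
    (f := fun x => μ x ^ (-(conj' p))) (g := fun x => lam x ^ q)
    (fun x => Real.rpow_pos_of_pos (hμpos x) _)
    (fun x => Real.rpow_pos_of_pos (hlampos x) _)
    Iμp' Ilamq hM0 hL0 ha0 ha1
  obtain ⟨hHint, hK2a⟩ := K2a
  have hHpos : ∀ x, 0 < (μ x ^ (-(conj' p))) ^ a * (lam x ^ q) ^ (1 - a) := fun x =>
    mul_pos (Real.rpow_pos_of_pos (Real.rpow_pos_of_pos (hμpos x) _) _)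
      (Real.rpow_pos_of_pos (Real.rpow_pos_of_pos (hlampos x) _) _)
  have hH : 0 < ∫ x in Cube d c l, (μ x ^ (-(conj' p))) ^ a * (lam x ^ q) ^ (1 - a) :=
    pos_setIntegral hvolne hHpos hHint
  -- K2b
  set t := (1 + r + u)⁻¹ with htdef
  have htden : (0:ℝ) < 1 + r + u := by linarith
  have ht0 : 0 < t := by rw [htdef]; exact inv_pos.mpr htden
  have ht1 : t < 1 := by
    rw [htdef, inv_lt_one_iff₀]; right; linarith
  have ht0' : t ≠ 0 := ht0.ne'
  have h1t : 1 - t = t * (r + u) := by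
    rw [htdef]; field_simp; ring
  have hat : a * (1 - t) = t * r := by
    rw [h1t, hadef]; field_simp
  have h1at : (1 - a) * (1 - t) = t * u := by
    rw [h1a, h1t]; field_simp
  have K2b := holder2 (ρ := volume.restrict (Cube d c l))
    (f := fun x => (μ x / lam x) ^ s)
    (g := fun x => (μ x ^ (-(conj' p))) ^ a * (lam x ^ q) ^ (1 - a))
    (fun x => Real.rpow_pos_of_pos (div_pos (hμpos x) (hlampos x)) _)
    hHpos hνint hHint hV hH ht0 ht1
  obtain ⟨-, hK2b⟩ := K2b
  -- the pointwise identity ν^t h^{1-t} = 1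
  have hone : ∀ x, ((μ x / lam x) ^ s) ^ t *
      ((μ x ^ (-(conj' p))) ^ a * (lam x ^ q) ^ (1 - a)) ^ (1 - t) = 1 := by
    intro x
    have hX := hμpos x; have hY := hlampos x
    have hXY : 0 < μ x / lam x := div_pos hX hY
    have e0 : ((μ x / lam x) ^ s) ^ t = μ x ^ (s*t) * lam x ^ (-(s*t)) := by
      rw [← Real.rpow_mul hXY.le, Real.div_rpow hX.le hY.le, Real.rpow_neg hY.le,
        div_eq_mul_inv]
    have e1 : ((μ x ^ (-(conj' p))) ^ a) ^ (1 - t) = μ x ^ (-(s*t)) := by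
      rw [← Real.rpow_mul hX.le, ← Real.rpow_mul hX.le]
      congr 1
      calc -(conj' p) * a * (1 - t) = -(conj' p) * (a * (1-t)) := by ring
        _ = -(conj' p) * (t * (s / conj' p)) := by rw [hat, hrdef]
        _ = -(s*t) := by field_simp
    have e2 : ((lam x ^ q) ^ (1 - a)) ^ (1 - t) = lam x ^ (s*t) := by
      rw [← Real.rpow_mul hY.le, ← Real.rpow_mul hY.le]
      congr 1
      calc q * (1 - a) * (1 - t) = q * ((1-a) * (1-t)) := by ring
        _ = q * (t * (s / q)) := by rw [h1at, hudef]
        _ = s*t := by field_simp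
    rw [Real.mul_rpow (Real.rpow_nonneg (Real.rpow_pos_of_pos hX _).le _)
        (Real.rpow_nonneg (Real.rpow_pos_of_pos hY _).le _), e0, e1, e2]
    have hXst := Real.rpow_pos_of_pos hX (s*t)
    have hYst := Real.rpow_pos_of_pos hY (s*t)
    rw [Real.rpow_neg hX.le, Real.rpow_neg hY.le]
    field_simp
  have hw_eq : (∫ x in Cube d c l, ((μ x / lam x) ^ s) ^ t *
      ((μ x ^ (-(conj' p))) ^ a * (lam x ^ q) ^ (1 - a)) ^ (1 - t)) = w := by
    simp only [hone]
    rw [setIntegral_const]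
    simp [hwdef, Measure.real]
  rw [hw_eq] at hK2b
  -- combine: w ≤ V^t * (M0^a * L0^(1-a))^(1-t)
  have hw2 : w ≤ V ^ t * (M0 ^ a * L0 ^ (1 - a)) ^ (1 - t) := by
    refine hK2b.trans ?_
    exact mul_le_mul_of_nonneg_left
      (Real.rpow_le_rpow hH.le hK2a (by linarith)) (Real.rpow_nonneg hV.le _)
  -- scalar identities
  have hσr : r * σ = 1 / conj' p := by
    rw [hrdef, div_mul_eq_mul_div, hsσ]
  have hσu : u * σ = 1 / q := by
    rw [hudef, div_mul_eq_mul_div, hsσ]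
  have hst2 : σ / t = 2 := by
    have h5 : σ / t = σ * (1 + r + u) := by rw [htdef, div_eq_mul_inv, inv_inv]
    have h6 : σ * (1 + r + u) = σ + r * σ + u * σ := by ring
    rw [h5, h6, hσr, hσu]
    linarith [hσ, hpinv, hqinv]
  have c1 : t * (σ/t) = σ := by field_simp
  have c2 : a * ((1-t) * (σ/t)) = 1 / conj' p := by
    calc a * ((1 - t) * (σ / t)) = (a * (1-t)) * (σ/t) := by ring
      _ = (t * r) * (σ/t) := by rw [hat]
      _ = r * (t * (σ/t)) := by ring
      _ = r * σ := by rw [c1]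
      _ = 1 / conj' p := hσr
  have c3 : (1-a) * ((1-t) * (σ/t)) = 1 / q := by
    calc (1-a) * ((1 - t) * (σ / t)) = ((1-a) * (1-t)) * (σ/t) := by ring
      _ = (t * u) * (σ/t) := by rw [h1at]
      _ = u * (t * (σ/t)) := by ring
      _ = u * σ := by rw [c1]
      _ = 1 / q := hσu
  have hK2 : w ^ (2:ℝ) ≤ V ^ σ * (M0 ^ (1/conj' p) * L0 ^ (1/q)) := by
    rw [← hst2]
    have base := Real.rpow_le_rpow hw.le hw2 (by positivity : (0:ℝ) ≤ σ/t)
    refine base.trans (le_of_eq ?_)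
    rw [Real.mul_rpow (Real.rpow_nonneg hV.le _) (Real.rpow_nonneg (by positivity) _),
      ← Real.rpow_mul hV.le, ← Real.rpow_mul (by positivity : (0:ℝ) ≤ M0 ^ a * L0 ^ (1-a)),
      Real.mul_rpow (Real.rpow_nonneg hM0.le _) (Real.rpow_nonneg hL0.le _),
      ← Real.rpow_mul hM0.le, ← Real.rpow_mul hL0.le, c1, c2, c3]
  -- K3: the A_p conditions
  have hwexp : w ^ (1/p) * w ^ (1/conj' p) = w := by
    rw [← Real.rpow_add hw, hpinv, Real.rpow_one]
  have hwexp' : w ^ (1/q) * w ^ (1/conj' q) = w := by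
    rw [← Real.rpow_add hw, hqinv, Real.rpow_one]
  have hK3 : A0 ^ (1/p) * M0 ^ (1/conj' p) ≤ Cμ * w := by
    have h := hAμ c l hl
    simp only [avg] at h
    rw [← hA0def, ← hM0def, ← hwdef, Real.div_rpow hA0.le hw.le,
      Real.div_rpow hM0.le hw.le, div_mul_div_comm, div_le_iff₀ (by positivity)] at h
    rw [hwexp] at h
    exact h
  have hK3' : L0 ^ (1/q) * B0 ^ (1/conj' q) ≤ Clam * w := by
    have h := hAlam c l hl
    simp only [avg] at h
    rw [← hL0def, ← hB0def, ← hwdef, Real.div_rpow hL0.le hw.le,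
      Real.div_rpow hB0.le hw.le, div_mul_div_comm, div_le_iff₀ (by positivity)] at h
    rw [hwexp'] at h
    exact h
  -- final combination
  have hVσpos : 0 < V ^ σ := Real.rpow_pos_of_pos hV σ
  have hD1 : 0 < A0 ^ (1/p) * B0 ^ (1/conj' q) := by positivity
  have hVle : V ^ σ ≤ A0 ^ (1/p) * B0 ^ (1/conj' q) := by
    refine (Real.rpow_le_rpow hV.le hK1' hσpos.le).trans (le_of_eq ?_)
    rw [Real.mul_rpow (Real.rpow_nonneg hA0.le _) (Real.rpow_nonneg hB0.le _),
      ← Real.rpow_mul hA0.le, ← Real.rpow_mul hB0.le,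
      div_mul_eq_mul_div, hsσ, div_mul_eq_mul_div, hsσ]
  have hmain : A0 ^ (1/p) * B0 ^ (1/conj' q) ≤ Cμ * Clam * V ^ σ := by
    have hE : 0 < M0 ^ (1/conj' p) * L0 ^ (1/q) := by positivity
    refine le_of_mul_le_mul_right ?_ hE
    calc (A0 ^ (1/p) * B0 ^ (1/conj' q)) * (M0 ^ (1/conj' p) * L0 ^ (1/q))
        = (A0 ^ (1/p) * M0 ^ (1/conj' p)) * (L0 ^ (1/q) * B0 ^ (1/conj' q)) := by ring
      _ ≤ (Cμ * w) * (Clam * w) := mul_le_mul hK3 hK3' (by positivity) (by positivity)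
      _ = Cμ * Clam * (w ^ (2:ℝ)) := by
          rw [show ((2:ℝ)) = ((2:ℕ):ℝ) by norm_num, Real.rpow_natCast]; ring
      _ ≤ Cμ * Clam * (V ^ σ * (M0 ^ (1/conj' p) * L0 ^ (1/q))) :=
          mul_le_mul_of_nonneg_left hK2 (by positivity)
      _ = Cμ * Clam * V ^ σ * (M0 ^ (1/conj' p) * L0 ^ (1/q)) := by ring
  set N := ∫ x in Cube d c l, ‖b x - avgC d b (Cube d c l)‖ with hNdef
  have hN : 0 ≤ N := integral_nonneg fun x => norm_nonneg _
  have hRHSeq : V ^ (-β) * (N / V) = N / V ^ σ := by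
    rw [hσdef, show (1:ℝ)+β = β+1 by ring, Real.rpow_add_one hV.ne',
      Real.rpow_neg hV.le]
    field_simp
  constructor
  · rw [hRHSeq]
    gcongr
  · rw [hRHSeq, show Cμ * Clam * (N / (A0 ^ (1/p) * B0 ^ (1/conj' q)))
      = (Cμ * Clam * N) / (A0 ^ (1/p) * B0 ^ (1/conj' q)) by ring,
      div_le_div_iff₀ hVσpos hD1]
    calc N * (A0 ^ (1/p) * B0 ^ (1/conj' q))
        ≤ N * (Cμ * Clam * V ^ σ) := mul_le_mul_of_nonneg_left hmain hN
      _ = Cμ * Clam * N * V ^ σ := by ring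
end

section
/- Let $1<p,q<\infty$, let $\mu,\lambda$ be arbitrary weights on $\mathbb{R}^d$, and let $U:L^p_\mu\to L^q_\lambda$ be a bounded linear operator, where $\|f\|_{L^s_\sigma}=(\int|f\sigma|^s)^{1/s}$. Then there is no sequence $(u_i)_{i\ge1}$ of functions satisfying: (i) $\sup_i\|u_i\|_{L^p_\mu}\le C<\infty$; (ii) the supports $\{u_i\ne0\}$ are pairwise disjoint; (iii) there exists $\Phi\in L^q_\lambda$ with $\|\Phi\|_{L^q_\lambda}>0$ and $\|\Phi-U(u_i)\|_{L^q_\lambda}\to0$ as $i\to\infty$. -/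
open MeasureTheory Filter
open scoped ENNReal NNReal

set_option maxHeartbeats 1000000

private lemma lpCoeFn_sum {α E : Type*} {m : MeasurableSpace α} [NormedAddCommGroup E]
    {P : ENNReal} {ν : MeasureTheory.Measure α} (s : Finset ℕ) (f : ℕ → Lp E P ν) :
    ⇑(∑ i ∈ s, f i) =ᵐ[ν] fun x => ∑ i ∈ s, f i x := by
  classical
  induction s using Finset.induction_on with
  | empty => simp only [Finset.sum_empty]; exact Lp.coeFn_zero E P ν
  | @insert j s hj ih =>
    rw [Finset.sum_insert hj]
    filter_upwards [Lp.coeFn_add (f j) (∑ i ∈ s, f i), ih] with x h1 h2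
    rw [h1, Pi.add_apply, h2, Finset.sum_insert hj]

private lemma stmt5_aux {α β : Type*} [MeasurableSpace α] [MeasurableSpace β]
    (p : ℝ) (hp : 1 < p) {P Q : ℝ≥0∞} [Fact (1 ≤ P)] [Fact (1 ≤ Q)]
    (hPne : P ≠ 0) (hPtop : P ≠ ⊤) (hPto : P.toReal = p)
    (ν : Measure α) (lamν : Measure β)
    (U : Lp ℂ P ν →L[ℂ] Lp ℂ Q lamν)
    (u : ℕ → α → ℂ) (hu : ∀ i, MemLp (u i) P ν)
    (C : ℝ) (hbd : ∀ i, ‖(hu i).toLp (u i)‖ ≤ C)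
    (hdisj : ∀ i j, i ≠ j → ∀ x, u i x = 0 ∨ u j x = 0)
    (Φ : Lp ℂ Q lamν) (hΦ : 0 < ‖Φ‖)
    (hconv : Tendsto (fun i => ‖Φ - U ((hu i).toLp (u i))‖) atTop (nhds 0)) :
    False := by
  classical
  have hp0 : (0:ℝ) < p := lt_trans one_pos hp
  set a : ℕ → ℝ := fun i => 1 / (i + 1) with hadef
  have hapos : ∀ i, 0 < a i := fun i => by positivity
  set C' := max C 0 with hC'def
  have hC' : 0 ≤ C' := le_max_right _ _
  have hbd' : ∀ i, ‖(hu i).toLp (u i)‖ ≤ C' := fun i => (hbd i).trans (le_max_left _ _)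
  -- summability of a^p
  have hsum : Summable fun i => a i ^ p := by
    have h1 : Summable fun n : ℕ => 1 / (n : ℝ) ^ p := Real.summable_one_div_nat_rpow.mpr hp
    have h2 := (summable_nat_add_iff 1).mpr h1
    refine h2.congr fun n => ?_
    simp only [hadef]
    rw [Real.div_rpow (by norm_num) (by positivity), Real.one_rpow]
    push_cast
    ring_nf
  set B := ∑' i, a i ^ p with hBdef
  have hB0 : 0 ≤ B := tsum_nonneg fun i => (Real.rpow_pos_of_pos (hapos i) p).le
  -- pointwise disjointness identity
  have hptwise : ∀ (s : Finset ℕ) (x : α),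
      ((‖∑ i ∈ s, (a i : ℂ) • u i x‖₊ : ℝ≥0∞)) ^ p
        = ∑ i ∈ s, ((‖(a i : ℂ) • u i x‖₊ : ℝ≥0∞)) ^ p := by
    intro s x
    by_cases hall : ∀ i ∈ s, u i x = 0
    · rw [Finset.sum_eq_zero fun i hi => by simp [hall i hi]]
      rw [Finset.sum_eq_zero fun i hi => by
        simp [hall i hi, ENNReal.zero_rpow_of_pos hp0]]
      simp [ENNReal.zero_rpow_of_pos hp0]
    · push_neg at hall
      obtain ⟨j, hj, hjne⟩ := hall
      have hz : ∀ i ∈ s, i ≠ j → (a i : ℂ) • u i x = 0 := by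
        intro i hi hij
        rcases hdisj i j hij x with h | h
        · simp [h]
        · exact absurd h hjne
      rw [Finset.sum_eq_single_of_mem j hj hz,
        Finset.sum_eq_single_of_mem j hj fun i hi hij => by
          rw [hz i hi hij]; simp [ENNReal.zero_rpow_of_pos hp0]]
  -- norm bound on finite sums
  have hnormF : ∀ s : Finset ℕ,
      ‖∑ i ∈ s, (a i : ℂ) • (hu i).toLp (u i)‖ ≤ C' * B ^ (1/p) := by
    intro s
    have hmem : ∀ i ∈ s, MemLp (fun x => (a i : ℂ) • u i x) P ν :=
      fun i _ => (hu i).const_smul ((a i : ℂ))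
    have hmemsum : MemLp (fun x => ∑ i ∈ s, (a i : ℂ) • u i x) P ν :=
      memLp_finset_sum s hmem
    have hcoe : ⇑(∑ i ∈ s, (a i : ℂ) • (hu i).toLp (u i))
        =ᵐ[ν] fun x => ∑ i ∈ s, (a i : ℂ) • u i x := by
      have h2 : ∀ i ∈ s, ⇑((a i : ℂ) • (hu i).toLp (u i)) =ᵐ[ν]
          fun x => (a i : ℂ) • u i x := by
        intro i hi
        filter_upwards [Lp.coeFn_smul (a i : ℂ) ((hu i).toLp (u i)),
          (hu i).coeFn_toLp] with x hx hy
        rw [hx, Pi.smul_apply, hy]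
      have h3 := (eventually_all_finset s).mpr h2
      filter_upwards [lpCoeFn_sum s (fun i => (a i : ℂ) • (hu i).toLp (u i)), h3] with x hx h
      rw [hx]
      exact Finset.sum_congr rfl fun i hi => h i hi
    have hnormeq : ‖∑ i ∈ s, (a i : ℂ) • (hu i).toLp (u i)‖
        = (eLpNorm (fun x => ∑ i ∈ s, (a i : ℂ) • u i x) P ν).toReal := by
      rw [Lp.norm_def, eLpNorm_congr_ae hcoe]
    rw [hnormeq]
    -- bound the eLpNorm
    have hmeas : ∀ i ∈ s, AEMeasurable
        (fun x => ((‖(a i : ℂ) • u i x‖₊ : ℝ≥0∞)) ^ p) ν := by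
      intro i hi
      exact ((hmem i hi).aestronglyMeasurable.enorm).pow_const p
    have hint : ∀ i, (∫⁻ x, ((‖u i x‖₊ : ℝ≥0∞)) ^ p ∂ν) = (eLpNorm (u i) P ν) ^ p := by
      intro i
      rw [eLpNorm_eq_lintegral_rpow_enorm_toReal hPne hPtop, hPto, ← ENNReal.rpow_mul,
        one_div_mul_cancel hp0.ne', ENNReal.rpow_one]
      rfl
    have hui : ∀ i, eLpNorm (u i) P ν ≤ ENNReal.ofReal C' := by
      intro i
      have h1 : (eLpNorm (u i) P ν).toReal ≤ C' := by
        rw [← Lp.norm_toLp _ (hu i)]; exact hbd' i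
      have h2 : eLpNorm (u i) P ν ≠ ⊤ := (hu i).2.ne
      rw [← ENNReal.ofReal_toReal h2]
      exact ENNReal.ofReal_le_ofReal h1
    have hkey : eLpNorm (fun x => ∑ i ∈ s, (a i : ℂ) • u i x) P ν
        ≤ ENNReal.ofReal (C' ^ p * B) ^ (1/p) := by
      rw [eLpNorm_eq_lintegral_rpow_enorm_toReal hPne hPtop, hPto]
      refine ENNReal.rpow_le_rpow ?_ (by positivity)
      calc ∫⁻ x, ((‖∑ i ∈ s, (a i : ℂ) • u i x‖₊ : ℝ≥0∞)) ^ p ∂ν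
          = ∫⁻ x, ∑ i ∈ s, ((‖(a i : ℂ) • u i x‖₊ : ℝ≥0∞)) ^ p ∂ν := by
            refine lintegral_congr fun x => hptwise s x
        _ = ∑ i ∈ s, ∫⁻ x, ((‖(a i : ℂ) • u i x‖₊ : ℝ≥0∞)) ^ p ∂ν :=
            lintegral_finset_sum' s hmeas
        _ ≤ ENNReal.ofReal (C' ^ p * B) := by
            have heach : ∀ i ∈ s, (∫⁻ x, ((‖(a i : ℂ) • u i x‖₊ : ℝ≥0∞)) ^ p ∂ν)
                ≤ ENNReal.ofReal (a i ^ p) * ENNReal.ofReal (C' ^ p) := by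
              intro i hi
              have hpt : ∀ x : α, ((‖(a i : ℂ) • u i x‖₊ : ℝ≥0∞)) ^ p
                  = ENNReal.ofReal (a i ^ p) * ((‖u i x‖₊ : ℝ≥0∞)) ^ p := by
                intro x
                rw [nnnorm_smul, ENNReal.coe_mul,
                  ENNReal.mul_rpow_of_nonneg _ _ hp0.le]
                congr 1
                rw [Complex.nnnorm_real, ← enorm_eq_nnnorm, Real.enorm_eq_ofReal (hapos i).le,
                  ENNReal.ofReal_rpow_of_nonneg (hapos i).le hp0.le]
              calc (∫⁻ x, ((‖(a i : ℂ) • u i x‖₊ : ℝ≥0∞)) ^ p ∂ν)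
                  = ENNReal.ofReal (a i ^ p) * ∫⁻ x, ((‖u i x‖₊ : ℝ≥0∞)) ^ p ∂ν := by
                    simp_rw [hpt]
                    rw [lintegral_const_mul' _ _ ENNReal.ofReal_ne_top]
                _ ≤ ENNReal.ofReal (a i ^ p) * ENNReal.ofReal (C' ^ p) := by
                    refine mul_le_mul_right ?_ _
                    rw [hint i]
                    calc (eLpNorm (u i) P ν) ^ p ≤ (ENNReal.ofReal C') ^ p :=
                        ENNReal.rpow_le_rpow (hui i) hp0.le
                      _ = ENNReal.ofReal (C' ^ p) :=
                        ENNReal.ofReal_rpow_of_nonneg hC' hp0.le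
            calc ∑ i ∈ s, ∫⁻ x, ((‖(a i : ℂ) • u i x‖₊ : ℝ≥0∞)) ^ p ∂ν
                ≤ ∑ i ∈ s, ENNReal.ofReal (a i ^ p) * ENNReal.ofReal (C' ^ p) :=
                  Finset.sum_le_sum heach
              _ = (∑ i ∈ s, ENNReal.ofReal (a i ^ p)) * ENNReal.ofReal (C' ^ p) :=
                  (Finset.sum_mul _ _ _).symm
              _ ≤ (∑' i, ENNReal.ofReal (a i ^ p)) * ENNReal.ofReal (C' ^ p) :=
                  mul_le_mul_left (ENNReal.sum_le_tsum s) _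
              _ = ENNReal.ofReal B * ENNReal.ofReal (C' ^ p) := by
                  rw [hBdef, ENNReal.ofReal_tsum_of_nonneg
                    (fun i => (Real.rpow_pos_of_pos (hapos i) p).le) hsum]
              _ = ENNReal.ofReal (C' ^ p * B) := by
                  rw [← ENNReal.ofReal_mul hB0, mul_comm]
    calc (eLpNorm (fun x => ∑ i ∈ s, (a i : ℂ) • u i x) P ν).toReal
        ≤ (ENNReal.ofReal (C' ^ p * B) ^ (1/p)).toReal := by
          refine ENNReal.toReal_mono ?_ hkey
          exact (ENNReal.rpow_ne_top_of_nonneg (by positivity) ENNReal.ofReal_ne_top)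
      _ = C' * B ^ (1/p) := by
          rw [ENNReal.ofReal_rpow_of_nonneg (by positivity) (by positivity),
            ENNReal.toReal_ofReal (by positivity),
            Real.mul_rpow (by positivity) hB0,
            ← Real.rpow_mul hC', mul_one_div_cancel hp0.ne', Real.rpow_one]
  -- choose M so that the error is small
  have hM : ∃ M : ℕ, ∀ i, M ≤ i → ‖Φ - U ((hu i).toLp (u i))‖ ≤ ‖Φ‖ / 2 := by
    have := hconv.eventually_lt_const (half_pos hΦ)
    rw [eventually_atTop] at this
    obtain ⟨M, hM⟩ := this
    exact ⟨M, fun i hi => (hM i hi).le⟩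
  obtain ⟨M, hM⟩ := hM
  set K := ‖U‖ * (C' * B ^ (1/p)) with hKdef
  -- main bound for each N
  have hmain : ∀ N : ℕ, M ≤ N → (∑ i ∈ Finset.Ico M N, a i) * (‖Φ‖ / 2) ≤ K := by
    intro N hN
    set s := Finset.Ico M N with hsdef
    set A := ∑ i ∈ s, a i with hAdef
    have hA0 : 0 ≤ A := Finset.sum_nonneg fun i _ => (hapos i).le
    set F := ∑ i ∈ s, (a i : ℂ) • (hu i).toLp (u i) with hFdef
    have hUF : ‖U F‖ ≤ K := by
      calc ‖U F‖ ≤ ‖U‖ * ‖F‖ := U.le_opNorm F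
        _ ≤ ‖U‖ * (C' * B ^ (1/p)) :=
          mul_le_mul_of_nonneg_left (hnormF s) (norm_nonneg U)
    have hUFs : U F = ∑ i ∈ s, (a i : ℂ) • U ((hu i).toLp (u i)) := by
      rw [hFdef, map_sum]
      exact Finset.sum_congr rfl fun i _ => U.map_smul _ _
    have hsplit : (A : ℂ) • Φ = U F + ∑ i ∈ s, (a i : ℂ) • (Φ - U ((hu i).toLp (u i))) := by
      rw [hUFs, ← Finset.sum_add_distrib]
      have : ∀ i ∈ s, (a i : ℂ) • U ((hu i).toLp (u i))
          + (a i : ℂ) • (Φ - U ((hu i).toLp (u i))) = (a i : ℂ) • Φ := by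
        intro i _
        rw [← smul_add]
        congr 1
        abel
      rw [Finset.sum_congr rfl this, ← Finset.sum_smul]
      congr 1
      push_cast [hAdef]
      rfl
    have herr : ‖∑ i ∈ s, (a i : ℂ) • (Φ - U ((hu i).toLp (u i)))‖ ≤ A * (‖Φ‖ / 2) := by
      calc ‖∑ i ∈ s, (a i : ℂ) • (Φ - U ((hu i).toLp (u i)))‖
          ≤ ∑ i ∈ s, ‖(a i : ℂ) • (Φ - U ((hu i).toLp (u i)))‖ := norm_sum_le _ _
        _ ≤ ∑ i ∈ s, a i * (‖Φ‖ / 2) := by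
            refine Finset.sum_le_sum fun i hi => ?_
            rw [norm_smul, Complex.norm_real, Real.norm_of_nonneg (hapos i).le]
            exact mul_le_mul_of_nonneg_left (hM i (Finset.mem_Ico.mp hi).1) (hapos i).le
        _ = A * (‖Φ‖ / 2) := by rw [hAdef, Finset.sum_mul]
    have hAΦ : A * ‖Φ‖ ≤ K + A * (‖Φ‖ / 2) := by
      have h1 : ‖(A : ℂ) • Φ‖ = A * ‖Φ‖ := by
        rw [norm_smul, Complex.norm_real, Real.norm_of_nonneg hA0]
      calc A * ‖Φ‖ = ‖(A : ℂ) • Φ‖ := h1.symm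
        _ ≤ ‖U F‖ + ‖∑ i ∈ s, (a i : ℂ) • (Φ - U ((hu i).toLp (u i)))‖ := by
            rw [hsplit]; exact norm_add_le _ _
        _ ≤ K + A * (‖Φ‖ / 2) := add_le_add hUF herr
    nlinarith [hA0, hΦ]
  -- divergence of the harmonic series gives a contradiction
  have hdiv : Tendsto (fun N => ∑ i ∈ Finset.range N, a i) atTop atTop := by
    have := Real.tendsto_sum_range_one_div_nat_succ_atTop
    refine this.congr fun n => Finset.sum_congr rfl fun i _ => ?_
    simp [hadef]
  have hKpos : 0 ≤ K := by
    have : (0:ℝ) ≤ C' * B ^ (1/p) := by positivity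
    exact mul_nonneg (norm_nonneg U) this
  set K2 := K / (‖Φ‖ / 2) with hK2def
  have hev := (hdiv.eventually_ge_atTop (K2 + 1 + ∑ i ∈ Finset.range M, a i)).and
    (eventually_ge_atTop M)
  obtain ⟨N, hN1, hN2⟩ := hev.exists
  have hIco : ∑ i ∈ Finset.Ico M N, a i
      = ∑ i ∈ Finset.range N, a i - ∑ i ∈ Finset.range M, a i := by
    rw [Finset.range_eq_Ico, Finset.sum_Ico_eq_sub _ hN2, Finset.range_eq_Ico]
  have hAbig : K2 + 1 ≤ ∑ i ∈ Finset.Ico M N, a i := by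
    rw [hIco]; linarith
  have hle := hmain N hN2
  have hhalf : (0:ℝ) < ‖Φ‖ / 2 := half_pos hΦ
  have : K < (∑ i ∈ Finset.Ico M N, a i) * (‖Φ‖ / 2) := by
    have h1 : K2 * (‖Φ‖ / 2) = K := div_mul_cancel₀ K hhalf.ne'
    nlinarith
  linarith


/-- If `U : L^p_μ → L^q_λ` is a bounded linear operator (weights as
multipliers, realized via the measures `μ^p dx` and `λ^q dx`), then there is no
uniformly bounded sequence `(u_i)` with pairwise disjoint supports such that
`U(u_i)` converges in `L^q_λ` to some `Φ` with `‖Φ‖ > 0`. -/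
theorem stmt5 (d : ℕ) (hd : 0 < d) (p q : ℝ) (hp : 1 < p) (hq : 1 < q)
    (μ lam : (Fin d → ℝ) → ℝ) (hμpos : ∀ x, 0 < μ x) (hlampos : ∀ x, 0 < lam x)
    (hμm : Measurable μ) (hlamm : Measurable lam)
    [Fact (1 ≤ ENNReal.ofReal p)] [Fact (1 ≤ ENNReal.ofReal q)]
    (U : Lp ℂ (ENNReal.ofReal p)
          (volume.withDensity fun x : Fin d → ℝ => ENNReal.ofReal (μ x ^ p)) →L[ℂ]
         Lp ℂ (ENNReal.ofReal q)
          (volume.withDensity fun x : Fin d → ℝ => ENNReal.ofReal (lam x ^ q)))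
    (u : ℕ → (Fin d → ℝ) → ℂ)
    (hu : ∀ i, MemLp (u i) (ENNReal.ofReal p)
      (volume.withDensity fun x : Fin d → ℝ => ENNReal.ofReal (μ x ^ p)))
    (C : ℝ) (hbd : ∀ i, ‖(hu i).toLp (u i)‖ ≤ C)
    (hdisj : ∀ i j, i ≠ j → ∀ x, u i x = 0 ∨ u j x = 0)
    (Φ : Lp ℂ (ENNReal.ofReal q)
      (volume.withDensity fun x : Fin d → ℝ => ENNReal.ofReal (lam x ^ q)))
    (hΦ : 0 < ‖Φ‖)
    (hconv : Tendsto (fun i => ‖Φ - U ((hu i).toLp (u i))‖) atTop (nhds 0)) :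
    False := by
  have hp0 : (0:ℝ) < p := lt_trans one_pos hp
  exact stmt5_aux p hp
    (by simp only [ne_eq, ENNReal.ofReal_eq_zero, not_le]; linarith)
    ENNReal.ofReal_ne_top (ENNReal.toReal_ofReal hp0.le)
    _ _ U u hu C hbd hdisj Φ hΦ hconv
end
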